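/- Define a*b = ab if a ≲ ab (and undefined otherwise), where a ≲ ab means: for all x ∈ ℤⁿ, 0 < x and 0 < xab imply 0 < xa (lexicographic order). Then for all a, b, c ∈ GL(n,ℤ), (a*b)*c is defined if and only if a*(b*c) is defined; i.e., (a ≲ ab and ab ≲ abc) iff (b ≲ bc and a ≲ abc). -/
import Mathlib


/-- `x > 0` in the standard lexicographic order on `ℤⁿ`. -/
def lexPos {n : ℕ} (x : Fin n → ℤ) : Prop :=
  ∃ i, (∀ j, j < i → x j = 0) ∧ 0 < x i

/-- `a ≲ c` (for `c = ab`): for all `x`, `0 < x` and `0 < xc` imply `0 < xa`. -/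
def Lesim {n : ℕ} (a c : Matrix.GeneralLinearGroup (Fin n) ℤ) : Prop :=
  ∀ x : Fin n → ℤ, lexPos x →
    lexPos (Matrix.vecMul x (c : Matrix (Fin n) (Fin n) ℤ)) →
    lexPos (Matrix.vecMul x (a : Matrix (Fin n) (Fin n) ℤ))

lemma lexPos_ne_zero {n : ℕ} {v : Fin n → ℤ} (h : lexPos v) : v ≠ 0 := by
  obtain ⟨i, -, hi⟩ := h
  intro h0
  simp [h0] at hi

lemma lexPos_or_neg {n : ℕ} {v : Fin n → ℤ} (h : v ≠ 0) : lexPos v ∨ lexPos (-v) := by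
  have hne : (Finset.univ.filter (fun i => v i ≠ 0)).Nonempty := by
    rw [Function.ne_iff] at h
    obtain ⟨i, hi⟩ := h
    exact ⟨i, by simpa using hi⟩
  set i := (Finset.univ.filter (fun i => v i ≠ 0)).min' hne with hidef
  have hmem : i ∈ Finset.univ.filter (fun i => v i ≠ 0) := Finset.min'_mem _ hne
  have hvi : v i ≠ 0 := by simpa using hmem
  have hmin : ∀ j, j < i → v j = 0 := by
    intro j hj
    by_contra hvj
    exact absurd (Finset.min'_le _ j (by simpa using hvj)) (not_le.mpr hj)
  rcases lt_or_gt_of_ne hvi with hneg | hpos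
  · exact Or.inr ⟨i, fun j hj => by simp [hmin j hj], by simpa using hneg⟩
  · exact Or.inl ⟨i, hmin, hpos⟩

lemma lexPos_neg_false {n : ℕ} {v : Fin n → ℤ} (h1 : lexPos v) (h2 : lexPos (-v)) :
    False := by
  obtain ⟨i, hi0, hi⟩ := h1
  obtain ⟨j, hj0, hj⟩ := h2
  simp only [Pi.neg_apply] at hj0 hj
  rcases lt_trichotomy i j with h | h | h
  · have := hj0 i h; omega
  · subst h; omega
  · have := hi0 j h; omega

lemma vecMul_ne_zero {n : ℕ} (a : Matrix.GeneralLinearGroup (Fin n) ℤ)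
    {x : Fin n → ℤ} (hx : x ≠ 0) :
    Matrix.vecMul x (a : Matrix (Fin n) (Fin n) ℤ) ≠ 0 := by
  intro h
  apply hx
  have := congrArg (fun y => Matrix.vecMul y ((a⁻¹ : Matrix.GeneralLinearGroup (Fin n) ℤ) :
      Matrix (Fin n) (Fin n) ℤ)) h
  simpa [Matrix.vecMul_vecMul, ← Units.val_mul] using this

/-- `(a*b)*c` is defined iff `a*(b*c)` is:
`(a ≲ ab and ab ≲ abc)` iff `(b ≲ bc and a ≲ abc)`. -/
theorem stmt8 {n : ℕ} (a b c : Matrix.GeneralLinearGroup (Fin n) ℤ) :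
    (Lesim a (a * b) ∧ Lesim (a * b) (a * b * c)) ↔
      (Lesim b (b * c) ∧ Lesim a (a * (b * c))) := by
  simp only [Lesim, Units.val_mul, ← Matrix.vecMul_vecMul]
  constructor
  · rintro ⟨h1, h2⟩
    constructor
    · -- b ≲ bc
      intro x hx hxbc
      set y := Matrix.vecMul x ((a⁻¹ : Matrix.GeneralLinearGroup (Fin n) ℤ) :
        Matrix (Fin n) (Fin n) ℤ) with hy
      have hya : Matrix.vecMul y (a : Matrix (Fin n) (Fin n) ℤ) = x := by
        simp [hy, Matrix.vecMul_vecMul, ← Units.val_mul]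
      have hyne : y ≠ 0 := vecMul_ne_zero _ (lexPos_ne_zero hx)
      rcases lexPos_or_neg hyne with hypos | hyneg
      · -- y > 0, ya = x > 0, y(abc) = x(bc) > 0 ⇒ y(ab) = xb > 0
        have := h2 y hypos (by rw [hya]; exact hxbc)
        rwa [hya] at this
      · -- -y > 0, (-y)a = -x < 0 ⇒ (by h1 contrapositive) (-y)(ab) = -(xb) not pos
        have hnyne : Matrix.vecMul (-y) ((a : Matrix (Fin n) (Fin n) ℤ) *
            (b : Matrix (Fin n) (Fin n) ℤ)) ≠ 0 := by
          rw [← Units.val_mul]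
          exact vecMul_ne_zero (a * b) (lexPos_ne_zero hyneg)
        rw [← Matrix.vecMul_vecMul] at hnyne
        rcases lexPos_or_neg hnyne with hpos | hneg
        · -- then by h1, (-y)a = -x > 0, contradicting x > 0
          have := h1 (-y) hyneg hpos
          rw [Matrix.neg_vecMul, hya] at this
          exact absurd (lexPos_neg_false hx this) (fun h => h)
        · rw [Matrix.neg_vecMul, hya, Matrix.neg_vecMul, neg_neg] at hneg
          exact hneg
    · -- a ≲ abc
      intro x hx hxabc
      exact h1 x hx (h2 x hx hxabc)
  · rintro ⟨h3, h4⟩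
    have key : ∀ x : Fin n → ℤ, lexPos x →
        lexPos (Matrix.vecMul (Matrix.vecMul x (a : Matrix (Fin n) (Fin n) ℤ))
          (b : Matrix (Fin n) (Fin n) ℤ)) →
        lexPos (Matrix.vecMul x (a : Matrix (Fin n) (Fin n) ℤ)) := by
      -- a ≲ ab
      intro x hx hxab
      set w := Matrix.vecMul x (a : Matrix (Fin n) (Fin n) ℤ) with hw
      have hwne : w ≠ 0 := vecMul_ne_zero a (lexPos_ne_zero hx)
      rcases lexPos_or_neg hwne with hpos | hneg
      · exact hpos
      · -- -xa > 0; (-xa)b = -(xab) < 0, so by h3 contrapositive ¬((-xa)(bc) > 0),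
        -- hence x(abc) > 0, hence by h4 xa > 0, contradiction
        exfalso
        have hbc : lexPos (Matrix.vecMul (Matrix.vecMul (-w) (b : Matrix (Fin n) (Fin n) ℤ))
            (c : Matrix (Fin n) (Fin n) ℤ)) → False := by
          intro hh
          have := h3 (-w) hneg hh
          rw [Matrix.neg_vecMul] at this
          exact lexPos_neg_false hxab this
        have hwbcne : Matrix.vecMul (Matrix.vecMul (-w) (b : Matrix (Fin n) (Fin n) ℤ))
            (c : Matrix (Fin n) (Fin n) ℤ) ≠ 0 := by
          rw [Matrix.vecMul_vecMul, ← Units.val_mul]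
          exact vecMul_ne_zero (b * c) (lexPos_ne_zero hneg)
        rcases lexPos_or_neg hwbcne with hp | hn
        · exact hbc hp
        · -- x(abc) > 0
          rw [Matrix.vecMul_vecMul, Matrix.neg_vecMul, neg_neg, ← Matrix.vecMul_vecMul] at hn
          have := h4 x hx (by rw [hw] at hn; exact hn)
          rw [← hw] at this
          exact lexPos_neg_false this hneg
    refine ⟨key, ?_⟩
    -- ab ≲ abc
    intro x hx hxabc
    have hxa := h4 x hx hxabc
    exact h3 (Matrix.vecMul x (a : Matrix (Fin n) (Fin n) ℤ)) hxa hxabc
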